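/- arXiv:math/0110222 — 3 statements merged into one kernel-verified Lean document; each statement's English description precedes it below -/
import Mathlib

section
/- Let A = (3) acting on ℝ (i.e. x ↦ 3x) with digit set D = {0, 1, 2, 3}, and define multisets S^{(k)} on ℝ by S^{(0)} = {0} and S^{(k+1)} = 3·S^{(k)} + D (multiset sum, counting multiplicities). Then for every k ≥ 0 the multiplicity of the point 3^k in S^{(m)} equals k + 1 for all sufficiently large m; in particular the limiting multiplicity function m_X on X = lim_k S^{(k)} satisfies m_X(3^k) = k + 1 and is unbounded. -/
/-- For the inflation data A = (3), D = {0,1,2,3} on ℝ, the iterated multisets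
S⁽⁰⁾ = {0}, S⁽ᵏ⁺¹⁾ = 3·S⁽ᵏ⁾ + D (counting multiplicity, with multiplicity functions
S k : ℝ → ℕ) have the property that the multiplicity of the point 3^k stabilizes
at the value k + 1; in particular the limiting multiplicity function is unbounded. -/
theorem stmt11 (S : ℕ → ℝ → ℕ)
    (hS0 : ∀ x : ℝ, S 0 x = if x = 0 then 1 else 0)
    (hSrec : ∀ (k : ℕ) (x : ℝ),
      S (k + 1) x = ∑ dv ∈ ({0, 1, 2, 3} : Finset ℝ), S k ((x - dv) / 3)) :
    ∀ k : ℕ, ∃ M : ℕ, ∀ m ≥ M, S m ((3 : ℝ) ^ k) = k + 1 := by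
  -- explicit four-term recurrence
  have hsum : ∀ (k : ℕ) (x : ℝ),
      S (k + 1) x = S k ((x - 0) / 3) + S k ((x - 1) / 3) + S k ((x - 2) / 3)
        + S k ((x - 3) / 3) := by
    intro k x
    rw [hSrec]
    rw [show ({0, 1, 2, 3} : Finset ℝ) = insert (0:ℝ) (insert 1 (insert 2 {3})) from rfl]
    rw [Finset.sum_insert (by norm_num), Finset.sum_insert (by norm_num),
      Finset.sum_insert (by norm_num), Finset.sum_singleton]
    ring
  -- vanishing off natural-number points
  have hne : ∀ (m : ℕ) (x : ℝ), (∀ n : ℕ, x ≠ (n : ℝ)) → S m x = 0 := by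
    intro m
    induction m with
    | zero =>
      intro x hx
      rw [hS0, if_neg]
      simpa using hx 0
    | succ m ih =>
      intro x hx
      rw [hsum]
      have h0 : S m ((x - 0) / 3) = 0 := by
        apply ih; intro n h
        exact hx (3 * n) (by field_simp at h; push_cast; linarith)
      have h1 : S m ((x - 1) / 3) = 0 := by
        apply ih; intro n h
        exact hx (3 * n + 1) (by field_simp at h; push_cast; linarith)
      have h2 : S m ((x - 2) / 3) = 0 := by
        apply ih; intro n h
        exact hx (3 * n + 2) (by field_simp at h; push_cast; linarith)
      have h3 : S m ((x - 3) / 3) = 0 := by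
        apply ih; intro n h
        exact hx (3 * n + 3) (by field_simp at h; push_cast; linarith)
      omega
  -- S m 0 = 1 for all m
  have hzero : ∀ m : ℕ, S m (0 : ℝ) = 1 := by
    intro m
    induction m with
    | zero => rw [hS0]; simp
    | succ m ih =>
      rw [hsum]
      have h1 : S m (((0:ℝ) - 1) / 3) = 0 := by
        apply hne; intro n h
        have : (0:ℝ) ≤ (n:ℝ) := Nat.cast_nonneg n
        nlinarith
      have h2 : S m (((0:ℝ) - 2) / 3) = 0 := by
        apply hne; intro n h
        have : (0:ℝ) ≤ (n:ℝ) := Nat.cast_nonneg n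
        nlinarith
      have h3 : S m (((0:ℝ) - 3) / 3) = 0 := by
        apply hne; intro n h
        have : (0:ℝ) ≤ (n:ℝ) := Nat.cast_nonneg n
        nlinarith
      have h0 : ((0:ℝ) - 0) / 3 = 0 := by norm_num
      rw [h0] at *
      omega
  -- uniqueness at 3^j - 1
  have hones : ∀ j m : ℕ, j ≤ m → S m ((3:ℝ) ^ j - 1) = 1 := by
    intro j
    induction j with
    | zero => intro m _; simpa using hzero m
    | succ j ih =>
      intro m hm
      obtain ⟨m', rfl⟩ : ∃ m', m = m' + 1 := ⟨m - 1, by omega⟩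
      rw [hsum]
      -- the d = 2 term is the real one
      have e2 : ((3:ℝ) ^ (j+1) - 1 - 2) / 3 = (3:ℝ) ^ j - 1 := by ring
      have key : ∀ (d : ℕ), d = 0 ∨ d = 1 ∨ d = 3 →
          S m' (((3:ℝ) ^ (j+1) - 1 - (d:ℝ)) / 3) = 0 := by
        intro d hd
        apply hne; intro n h
        have hR : (3:ℝ) ^ (j+1) = 3 * n + d + 1 := by field_simp at h; linarith
        have hN : (3:ℕ) ^ (j+1) = 3 * n + d + 1 := by
          have : ((3 ^ (j+1) : ℕ) : ℝ) = ((3 * n + d + 1 : ℕ) : ℝ) := by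
            push_cast; linarith
          exact_mod_cast this
        have hp : (3:ℕ) ^ (j+1) = 3 * 3 ^ j := by ring
        omega
      have h0 := key 0 (by omega)
      have h1 := key 1 (by omega)
      have h3 := key 3 (by omega)
      push_cast at h0 h1 h3
      rw [e2]
      have := ih m' (by omega)
      omega
  -- main claim
  have hmain : ∀ k m : ℕ, k + 1 ≤ m → S m ((3:ℝ) ^ k) = k + 1 := by
    intro k
    induction k with
    | zero =>
      intro m hm
      obtain ⟨m', rfl⟩ : ∃ m', m = m' + 1 := ⟨m - 1, by omega⟩
      rw [hsum]
      have h0 : S m' (((3:ℝ) ^ 0 - 0) / 3) = 0 := by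
        apply hne; intro n h
        have hR : (1:ℝ) = 3 * n := by norm_num at h; linarith
        have hN : (1:ℕ) = 3 * n := by exact_mod_cast hR
        omega
      have h2 : S m' (((3:ℝ) ^ 0 - 2) / 3) = 0 := by
        apply hne; intro n h
        have : (0:ℝ) ≤ (n:ℝ) := Nat.cast_nonneg n
        norm_num at h; nlinarith
      have h3 : S m' (((3:ℝ) ^ 0 - 3) / 3) = 0 := by
        apply hne; intro n h
        have : (0:ℝ) ≤ (n:ℝ) := Nat.cast_nonneg n
        norm_num at h; nlinarith
      have e1 : ((3:ℝ) ^ 0 - 1) / 3 = 0 := by norm_num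
      rw [e1]
      have := hzero m'
      omega
    | succ k ih =>
      intro m hm
      obtain ⟨m', rfl⟩ : ∃ m', m = m' + 1 := ⟨m - 1, by omega⟩
      rw [hsum]
      have e0 : ((3:ℝ) ^ (k+1) - 0) / 3 = (3:ℝ) ^ k := by ring
      have e3 : ((3:ℝ) ^ (k+1) - 3) / 3 = (3:ℝ) ^ k - 1 := by ring
      have key : ∀ (d : ℕ), d = 1 ∨ d = 2 →
          S m' (((3:ℝ) ^ (k+1) - (d:ℝ)) / 3) = 0 := by
        intro d hd
        apply hne; intro n h
        have hR : (3:ℝ) ^ (k+1) = 3 * n + d := by field_simp at h; linarith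
        have hN : (3:ℕ) ^ (k+1) = 3 * n + d := by
          have : ((3 ^ (k+1) : ℕ) : ℝ) = ((3 * n + d : ℕ) : ℝ) := by
            push_cast; linarith
          exact_mod_cast this
        have hp : (3:ℕ) ^ (k+1) = 3 * 3 ^ k := by ring
        omega
      have h1 := key 1 (by omega)
      have h2 := key 2 (by omega)
      push_cast at h1 h2
      rw [e0, e3]
      have ha := ih m' (by omega)
      have hb := hones k m' (by omega)
      omega
  intro k
  exact ⟨k + 1, fun m hm => hmain k m hm⟩
end

section
/- Let A = (2) on ℝ, n = 2, and D_{11} = D_{12} = D_{21} = D_{22} = {0,1}. There is no pair (X_1, X_2) of nonempty discrete multisets on ℝ (multiplicity functions ℝ → ℕ with locally finite support and finite values) satisfying X_i = (2·X_1 + D_{i1}) ∨ (2·X_2 + D_{i2}) for i = 1, 2: in any multiset solution every point of X_1 ∨ X_2 has infinite multiplicity. -/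
/-- For A = (2), n = 2, D₁₁ = D₁₂ = D₂₁ = D₂₂ = {0,1} on ℝ, there is no pair of
nonempty discrete multisets (multiplicity functions ℝ → ℕ with locally finite
support and finite values) solving the inflation functional equation
X_i = (2·X₁ + D) ∨ (2·X₂ + D), i = 1,2. -/
theorem stmt13 (m1 m2 : ℝ → ℕ)
    (h1 : ∀ x : ℝ, m1 x =
      ∑ dv ∈ ({0, 1} : Finset ℝ), (m1 ((x - dv) / 2) + m2 ((x - dv) / 2)))
    (h2 : ∀ x : ℝ, m2 x =
      ∑ dv ∈ ({0, 1} : Finset ℝ), (m1 ((x - dv) / 2) + m2 ((x - dv) / 2)))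
    (hne1 : ∃ x, m1 x ≠ 0) (hne2 : ∃ x, m2 x ≠ 0)
    (hlf1 : ∀ K : Set ℝ, IsCompact K → {x ∈ K | m1 x ≠ 0}.Finite)
    (hlf2 : ∀ K : Set ℝ, IsCompact K → {x ∈ K | m2 x ≠ 0}.Finite) :
    False := by
  have hsum : ∀ x : ℝ, m1 x =
      (m1 ((x - 0) / 2) + m2 ((x - 0) / 2)) + (m1 ((x - 1) / 2) + m2 ((x - 1) / 2)) := by
    intro x
    rw [h1 x, Finset.sum_pair (by norm_num : (0:ℝ) ≠ 1)]
  -- m1 = m2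
  have heq : ∀ x : ℝ, m1 x = m2 x := fun x => by rw [h1 x, h2 x]
  -- key step lemma
  have hstep : ∀ y : ℝ, m1 y ≠ 0 → ∃ z : ℝ, m1 z ≠ 0 ∧ 2 * m1 z ≤ m1 y := by
    intro y hy
    have h := hsum y
    rw [← heq ((y - 0)/2), ← heq ((y - 1)/2)] at h
    rcases Nat.eq_zero_or_pos (m1 ((y - 0)/2)) with hz | hz
    · refine ⟨(y - 1)/2, ?_, ?_⟩ <;> omega
    · refine ⟨(y - 0)/2, ?_, ?_⟩ <;> omega
  obtain ⟨x0, hx0⟩ := hne1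
  have hiter : ∀ k : ℕ, ∃ y : ℝ, m1 y ≠ 0 ∧ 2 ^ k * m1 y ≤ m1 x0 := by
    intro k
    induction k with
    | zero => exact ⟨x0, hx0, by simp⟩
    | succ n ih =>
      obtain ⟨y, hy, hle⟩ := ih
      obtain ⟨z, hz, hle2⟩ := hstep y hy
      refine ⟨z, hz, ?_⟩
      calc 2 ^ (n+1) * m1 z = 2 ^ n * (2 * m1 z) := by ring
        _ ≤ 2 ^ n * m1 y := Nat.mul_le_mul_left _ hle2
        _ ≤ m1 x0 := hle
  obtain ⟨y, hy, hle⟩ := hiter (m1 x0)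
  have : 2 ^ (m1 x0) ≤ m1 x0 := le_trans (Nat.le_mul_of_pos_right _ (Nat.pos_of_ne_zero hy)) hle
  exact absurd this (Nat.not_le.mpr Nat.lt_two_pow_self)
end

section
/- Let A = (3) on ℝ with single digit set D = {−1, 0, 1}. The set X = (−3/8 + ℤ) ∪ (−1/8 + ℤ) satisfies the inflation equation X = 3X + D (as sets, each point arising with total multiplicity counting one), X is a Delone set in ℝ, and the translates {[−1/2, 1/2] + x : x ∈ X} cover ℝ with every point covered exactly 2 times except for a set of measure zero (i.e. a multiple tiling of thickness 2). -/
open MeasureTheory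

private lemma div3 (n : ℤ) : ∃ k d : ℤ, (d = -1 ∨ d = 0 ∨ d = 1) ∧ n = 3*k + d := by
  refine ⟨(n+1)/3, n - 3*((n+1)/3), by omega, by omega⟩

private lemma uniq_ceil (a : ℝ) (ha : ∀ m : ℤ, a ≠ (m:ℝ)) (k : ℤ)
    (h1 : a ≤ (k:ℝ)) (h2 : (k:ℝ) ≤ a + 1) : k = ⌈a⌉ := by
  have hl : ⌈a⌉ ≤ k := Int.ceil_le.mpr h1
  have h3 : a < (⌈a⌉ : ℝ) :=
    lt_of_le_of_ne (Int.le_ceil a) (fun h => ha ⌈a⌉ h)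
  have h4 : (k:ℝ) < (⌈a⌉:ℝ) + 1 := by linarith
  have h5 : k < ⌈a⌉ + 1 := by exact_mod_cast h4
  omega

/-- For A = (3), D = {-1,0,1} on ℝ: the set X = (-3/8 + ℤ) ∪ (-1/8 + ℤ) satisfies
the inflation equation X = 3X + D, is a Delone set (uniformly discrete and
relatively dense), and the translates of the tile T = [-1/2, 1/2] by X cover
almost every point of ℝ exactly twice (a multiple tiling of thickness 2). -/
theorem stmt14 (X : Set ℝ)
    (hX : X = {y : ℝ | ∃ k : ℤ, y = (k : ℝ) - 3/8 ∨ y = (k : ℝ) - 1/8}) :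
    (X = {y : ℝ | ∃ x ∈ X, ∃ dv ∈ ({-1, 0, 1} : Set ℝ), y = 3 * x + dv}) ∧
    (∃ r > (0 : ℝ), ∀ z : ℝ, Set.Subsingleton (X ∩ Metric.ball z r)) ∧
    (∃ R > (0 : ℝ), ∀ z : ℝ, (X ∩ Metric.closedBall z R).Nonempty) ∧
    (∀ᵐ t : ℝ ∂volume, (X ∩ Set.Icc (t - 1/2) (t + 1/2)).ncard = 2) := by
  subst hX
  have mem8 : ∀ a : ℝ, (∃ k : ℤ, a = (k:ℝ) - 3/8 ∨ a = (k:ℝ) - 1/8) →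
      ∃ m : ℤ, 8 * a = (m:ℝ) := by
    rintro a ⟨k, h | h⟩
    · exact ⟨8*k - 3, by push_cast [h]; ring⟩
    · exact ⟨8*k - 1, by push_cast [h]; ring⟩
  refine ⟨?_, ?_, ?_, ?_⟩
  · -- inflation equation
    ext y
    simp only [Set.mem_setOf_eq, Set.mem_insert_iff, Set.mem_singleton_iff]
    constructor
    · rintro ⟨k, h | h⟩
      · -- y = k - 3/8 = 3(k' - 1/8) + d
        obtain ⟨k', d, hd, hk⟩ := div3 k
        refine ⟨(k':ℝ) - 1/8, ⟨k', Or.inr rfl⟩, (d:ℝ), ?_, ?_⟩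
        · rcases hd with h' | h' | h' <;> subst h' <;> simp
        · rw [h]; rw [hk]; push_cast; ring
      · -- y = k - 1/8 = 3(k' - 3/8) + d where k + 1 = 3k' + d
        obtain ⟨k', d, hd, hk⟩ := div3 (k + 1)
        refine ⟨(k':ℝ) - 3/8, ⟨k', Or.inl rfl⟩, (d:ℝ), ?_, ?_⟩
        · rcases hd with h' | h' | h' <;> subst h' <;> simp
        · rw [h]
          have : (k:ℝ) = 3*(k':ℝ) + (d:ℝ) - 1 := by
            have : ((k+1:ℤ):ℝ) = ((3*k'+d : ℤ):ℝ) := by rw [hk]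
            push_cast at this; linarith
          rw [this]; ring
    · rintro ⟨x, ⟨k, hx | hx⟩, d, hd, hy⟩ <;> subst hx <;> subst hy <;>
        rcases hd with h' | h' | h' <;> subst h'
      · exact ⟨3*k - 2, Or.inr (by push_cast; ring)⟩
      · exact ⟨3*k - 1, Or.inr (by push_cast; ring)⟩
      · exact ⟨3*k, Or.inr (by push_cast; ring)⟩
      · exact ⟨3*k - 1, Or.inl (by push_cast; ring)⟩
      · exact ⟨3*k, Or.inl (by push_cast; ring)⟩
      · exact ⟨3*k + 1, Or.inl (by push_cast; ring)⟩
  · -- uniformly discrete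
    refine ⟨1/16, by norm_num, fun z a ha b hb => ?_⟩
    obtain ⟨ma, hma⟩ := mem8 a ha.1
    obtain ⟨mb, hmb⟩ := mem8 b hb.1
    by_contra hne
    have hmne : ma ≠ mb := by
      intro h; apply hne
      have : (8:ℝ) * a = 8 * b := by rw [hma, hmb, h]
      linarith
    have h1 : (1:ℝ) ≤ |(ma:ℝ) - (mb:ℝ)| := by
      have := Int.one_le_abs (sub_ne_zero.mpr hmne)
      calc (1:ℝ) ≤ ((|ma - mb| : ℤ) : ℝ) := by exact_mod_cast this
        _ = |(ma:ℝ) - (mb:ℝ)| := by push_cast; ring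
    have ha' : |a - z| < 1/16 := by
      have := ha.2; rwa [Metric.mem_ball, Real.dist_eq] at this
    have hb' : |b - z| < 1/16 := by
      have := hb.2; rwa [Metric.mem_ball, Real.dist_eq] at this
    rw [← hma, ← hmb] at h1
    rcases le_abs.mp h1 with h | h <;>
      rcases abs_lt.mp ha' with ⟨ha1, ha2⟩ <;>
      rcases abs_lt.mp hb' with ⟨hb1, hb2⟩ <;> linarith
  · -- relatively dense
    refine ⟨1, by norm_num, fun z => ⟨(⌈z⌉:ℝ) - 3/8, ⟨⌈z⌉, Or.inl rfl⟩, ?_⟩⟩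
    rw [Metric.mem_closedBall, Real.dist_eq, abs_le]
    have h1 : z ≤ (⌈z⌉:ℝ) := Int.le_ceil z
    have h2 : (⌈z⌉:ℝ) < z + 1 := Int.ceil_lt_add_one z
    constructor <;> linarith
  · -- multiple tiling of thickness 2, a.e.
    have hS : volume (Set.range (fun m : ℤ => (m:ℝ)/8)) = 0 :=
      Set.Countable.measure_zero (Set.countable_range _) _
    filter_upwards [(MeasureTheory.measure_eq_zero_iff_ae_notMem).mp hS] with t ht
    have ht' : ∀ m : ℤ, t ≠ (m:ℝ)/8 := by
      intro m h; exact ht ⟨m, h.symm⟩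
    have ha1 : ∀ m : ℤ, t - 1/8 ≠ (m:ℝ) := by
      intro m h; exact ht' (8*m + 1) (by push_cast; linarith)
    have ha2 : ∀ m : ℤ, t - 3/8 ≠ (m:ℝ) := by
      intro m h; exact ht' (8*m + 3) (by push_cast; linarith)
    set k₁ := ⌈t - 1/8⌉ with hk₁
    set k₂ := ⌈t - 3/8⌉ with hk₂
    have hc1l : t - 1/8 < (k₁:ℝ) :=
      lt_of_le_of_ne (Int.le_ceil _) (fun h => ha1 k₁ h)
    have hc1u : (k₁:ℝ) < t - 1/8 + 1 := Int.ceil_lt_add_one _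
    have hc2l : t - 3/8 < (k₂:ℝ) :=
      lt_of_le_of_ne (Int.le_ceil _) (fun h => ha2 k₂ h)
    have hc2u : (k₂:ℝ) < t - 3/8 + 1 := Int.ceil_lt_add_one _
    have heq : {y : ℝ | ∃ k : ℤ, y = (k : ℝ) - 3/8 ∨ y = (k : ℝ) - 1/8} ∩
        Set.Icc (t - 1/2) (t + 1/2) = {(k₁:ℝ) - 3/8, (k₂:ℝ) - 1/8} := by
      ext x
      simp only [Set.mem_inter_iff, Set.mem_setOf_eq, Set.mem_Icc,
        Set.mem_insert_iff, Set.mem_singleton_iff]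
      constructor
      · rintro ⟨⟨k, hx | hx⟩, h1, h2⟩
        · left
          have hk : k = k₁ := by
            apply uniq_ceil _ ha1
            · rw [hx] at h1; linarith
            · rw [hx] at h2; linarith
          rw [hx, hk]
        · right
          have hk : k = k₂ := by
            apply uniq_ceil _ ha2
            · rw [hx] at h1; linarith
            · rw [hx] at h2; linarith
          rw [hx, hk]
      · rintro (h | h) <;> subst h
        · exact ⟨⟨k₁, Or.inl rfl⟩, by constructor <;> linarith⟩
        · exact ⟨⟨k₂, Or.inr rfl⟩, by constructor <;> linarith⟩
    rw [heq]
    apply Set.ncard_pair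
    intro h
    have : (8:ℝ)*k₁ - 3 = 8*k₂ - 1 := by linarith [h]
    have h2 : ((8*k₁ - 3 : ℤ):ℝ) = ((8*k₂ - 1 : ℤ):ℝ) := by push_cast; linarith
    have h3 : (8*k₁ - 3 : ℤ) = 8*k₂ - 1 := by exact_mod_cast h2
    omega
end
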